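/- Let R be a skew category of partitions and n ∈ ℕ. Then F_n(R) := F_∞(R) ∩ ℤ₂^{*n} is an S_n-invariant normal subgroup of ℤ₂^{*n}, and R_n := {p ∈ R : p has at most n blocks} = {p ∈ P : p is a rotation of ker(i) for some i with a_i ∈ F_n(R)}. -/

import Mathlib

attribute [local instance] Classical.propDecidable

noncomputable section

namespace GTQG

/-! ## Partitions -/

/-- The set `P(k,l)` of partitions of `{1,…,k,1',…,l'}`, encoded as equivalence
relations (i.e. set partitions) on the disjoint union `Fin k ⊕ Fin l`. -/
abbrev Part (k l : ℕ) : Type := Setoid (Fin k ⊕ Fin l)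

/-- `ker(i,j)`: the partition whose blocks are the fibers of the labelling
`x ↦ i x` on upper points and `y ↦ j y` on lower points. -/
def kerPartA {α : Type*} {k l : ℕ} (i : Fin k → α) (j : Fin l → α) : Part k l :=
  Setoid.ker (Sum.elim i j)

/-- `ker(i,j)` for `ℕ`-valued multi-indices. -/
abbrev kerPart {k l : ℕ} (i : Fin k → ℕ) (j : Fin l → ℕ) : Part k l := kerPartA i j

/-- `ker(i) = ker(i,∅) ∈ P(k,0)`. -/
def kerPart0 {k : ℕ} (i : Fin k → ℕ) : Part k 0 := kerPartA i Fin.elim0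

/-- The pair partition `⊔ ∈ P(0,2)`. -/
def pairPart : Part 0 2 := kerPartA Fin.elim0 (fun _ => (1 : ℕ))

/-- The identity partition `| ∈ P(1,1)`. -/
def idPart : Part 1 1 := kerPartA (fun _ => (1 : ℕ)) (fun _ => (1 : ℕ))

/-- The partition `p̂ = ker((1,1,2),(2,1,1)) ∈ P(3,3)`. -/
def pHat : Part 3 3 := kerPart ![1, 1, 2] ![2, 1, 1]

/-- The involution `p* ∈ P(l,k)`, turning `p` upside-down. -/
def invol {k l : ℕ} (p : Part k l) : Part l k := Setoid.comap Sum.swap p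

/-- The number of blocks of a partition. -/
def blockCount {k l : ℕ} (p : Part k l) : ℕ := Nat.card (Quotient p)

/-- The restriction of `p` to its upper row. -/
def upperSetoid {k l : ℕ} (p : Part k l) : Setoid (Fin k) := Setoid.comap Sum.inl p

/-- The restriction of `p` to its lower row. -/
def lowerSetoid {k l : ℕ} (p : Part k l) : Setoid (Fin l) := Setoid.comap Sum.inr p

/-- `p ∈ P(k,l)` and `q ∈ P(l,l')` are compatible if the lower row of `p`
and the upper row of `q` have the same block structure
(i.e. `j^(p) ∈ S_∞(i^(q))`). -/
def Compatible {k l l' : ℕ} (p : Part k l) (q : Part l l') : Prop :=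
  lowerSetoid p = upperSetoid q

section Comp

variable {k l l' : ℕ}

/-- The points of the vertical concatenation of `p ∈ P(k,l)` and `q ∈ P(l,l')`:
`k` upper points, `l` middle points, `l'` lower points. -/
abbrev CompCarrier (k l l' : ℕ) : Type := Fin k ⊕ (Fin l ⊕ Fin l')

/-- Inclusion of the points of `p` into the vertical concatenation. -/
def topIncl : Fin k ⊕ Fin l → CompCarrier k l l' := Sum.map id Sum.inl

/-- Inclusion of the points of `q` into the vertical concatenation. -/
def botIncl : Fin l ⊕ Fin l' → CompCarrier k l l' := Sum.inr

/-- Two points of the vertical concatenation are directly connected if they are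
connected by a string of `p` or by a string of `q`. -/
def compRel (p : Part k l) (q : Part l l') :
    CompCarrier k l l' → CompCarrier k l l' → Prop := fun x y =>
  (∃ u v, p u v ∧ x = topIncl u ∧ y = topIncl v) ∨
  (∃ u v, q u v ∧ x = botIncl u ∧ y = botIncl v)

/-- The partition of all points of the vertical concatenation of `p` and `q`
into connected components. -/
def middleJoin (p : Part k l) (q : Part l l') : Setoid (CompCarrier k l l') :=
  Relation.EqvGen.setoid (compRel p q)

/-- The composition `qp ∈ P(k,l')`: vertical concatenation with all loops removed. -/
def compPart (p : Part k l) (q : Part l l') : Part k l' :=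
  Setoid.comap (Sum.map id Sum.inr) (middleJoin p q)

/-- A point of the vertical concatenation is a middle point. -/
def IsMiddle (x : CompCarrier k l l') : Prop := ∃ m : Fin l, x = Sum.inr (Sum.inl m)

/-- The number `l(q,p)` of loops in the vertical concatenation of `p` and `q`:
connected components consisting entirely of middle points. -/
def loopCount (p : Part k l) (q : Part l l') : ℕ :=
  Nat.card {c : Quotient (middleJoin p q) //
    ∀ x : CompCarrier k l l', Quotient.mk (middleJoin p q) x = c → IsMiddle x}

end Comp

/-- The direct sum of two set partitions. -/
def sumSetoid {α β : Type*} (p : Setoid α) (q : Setoid β) : Setoid (α ⊕ β) :=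
  Setoid.ker (Sum.map (Quotient.mk p) (Quotient.mk q))

/-- The tensor product `p ⊗ q ∈ P(k+k',l+l')`: horizontal concatenation. -/
def tensorPart {k l k' l' : ℕ} (p : Part k l) (q : Part k' l') : Part (k + k') (l + l') :=
  Setoid.comap
    (Sum.elim
      (fun z => Fin.addCases (fun a => Sum.inl (Sum.inl a)) (fun b => Sum.inr (Sum.inl b)) z)
      (fun z => Fin.addCases (fun a => Sum.inl (Sum.inr a)) (fun b => Sum.inr (Sum.inr b)) z))
    (sumSetoid p q)

/-! ## Rotations -/

/-- Rotating the outermost left upper leg to the lower row (reindexing map). -/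
def rotULDmap (k l : ℕ) : Fin k ⊕ Fin (l + 1) → Fin (k + 1) ⊕ Fin l
  | .inl x => .inl x.succ
  | .inr y => Fin.cases (Sum.inl 0) (fun i => Sum.inr i) y

/-- Rotating the outermost left upper leg to the lower row. -/
def rotULD {k l : ℕ} (p : Part (k + 1) l) : Part k (l + 1) :=
  Setoid.comap (rotULDmap k l) p

/-- Rotating the outermost left lower leg to the upper row (reindexing map). -/
def rotDLUmap (k l : ℕ) : Fin (k + 1) ⊕ Fin l → Fin k ⊕ Fin (l + 1)
  | .inl x => Fin.cases (Sum.inr 0) (fun i => Sum.inl i) x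
  | .inr y => .inr y.succ

/-- Rotating the outermost left lower leg to the upper row. -/
def rotDLU {k l : ℕ} (p : Part k (l + 1)) : Part (k + 1) l :=
  Setoid.comap (rotDLUmap k l) p

/-- Rotating the outermost right upper leg to the lower row (reindexing map). -/
def rotURDmap (k l : ℕ) : Fin k ⊕ Fin (l + 1) → Fin (k + 1) ⊕ Fin l
  | .inl x => .inl x.castSucc
  | .inr y => Fin.lastCases (Sum.inl (Fin.last k)) (fun i => Sum.inr i) y

/-- Rotating the outermost right upper leg to the lower row. -/
def rotURD {k l : ℕ} (p : Part (k + 1) l) : Part k (l + 1) :=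
  Setoid.comap (rotURDmap k l) p

/-- Rotating the outermost right lower leg to the upper row (reindexing map). -/
def rotDRUmap (k l : ℕ) : Fin (k + 1) ⊕ Fin l → Fin k ⊕ Fin (l + 1)
  | .inl x => Fin.lastCases (Sum.inr (Fin.last l)) (fun i => Sum.inl i) x
  | .inr y => .inr y.castSucc

/-- Rotating the outermost right lower leg to the upper row. -/
def rotDRU {k l : ℕ} (p : Part k (l + 1)) : Part (k + 1) l :=
  Setoid.comap (rotDRUmap k l) p

/-- One basic rotation step between partitions (with varying numbers of
upper and lower points). -/
inductive BasicRot : (Σ k l : ℕ, Part k l) → (Σ k l : ℕ, Part k l) → Prop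
  | uld {k l : ℕ} (p : Part (k + 1) l) : BasicRot ⟨k + 1, l, p⟩ ⟨k, l + 1, rotULD p⟩
  | dlu {k l : ℕ} (p : Part k (l + 1)) : BasicRot ⟨k, l + 1, p⟩ ⟨k + 1, l, rotDLU p⟩
  | urd {k l : ℕ} (p : Part (k + 1) l) : BasicRot ⟨k + 1, l, p⟩ ⟨k, l + 1, rotURD p⟩
  | dru {k l : ℕ} (p : Part k (l + 1)) : BasicRot ⟨k, l + 1, p⟩ ⟨k + 1, l, rotDRU p⟩

/-- `IsRotationOf q p`: `q` is obtained from `p` by finitely many basic rotations. -/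
def IsRotationOf (q p : Σ k l : ℕ, Part k l) : Prop := Relation.ReflTransGen BasicRot p q

/-- A family `R ⊆ P` is closed under rotation. -/
def RotationClosed (R : ∀ k l : ℕ, Set (Part k l)) : Prop :=
  ∀ {k l k' l' : ℕ} (p : Part k l) (q : Part k' l'),
    p ∈ R k l → IsRotationOf ⟨k', l', q⟩ ⟨k, l, p⟩ → q ∈ R k' l'

/-! ## (Skew) categories of partitions -/

/-- A skew category of partitions: a collection `R ⊆ P` containing `⊔` and `|`,
closed under involution, connected tensor products and conditioned composition. -/
structure IsSkewCategory (R : ∀ k l : ℕ, Set (Part k l)) : Prop where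
  pair_mem : pairPart ∈ R 0 2
  id_mem : idPart ∈ R 1 1
  invol_mem : ∀ {k l : ℕ} {p : Part k l}, p ∈ R k l → invol p ∈ R l k
  conn_tensor_mem : ∀ {k l k' l' : ℕ} {p : Part k l} {q : Part k' l'}
      (i : Fin k → ℕ) (j : Fin l → ℕ) (f : Fin k' → ℕ) (g : Fin l' → ℕ),
      p ∈ R k l → q ∈ R k' l' → kerPart i j = p → kerPart f g = q →
      kerPart (Fin.append i f) (Fin.append j g) ∈ R (k + k') (l + l')
  cond_comp_mem : ∀ {k l l' : ℕ} {p : Part k l} {q : Part l l'},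
      p ∈ R k l → q ∈ R l l' → Compatible p q → compPart p q ∈ R k l'

/-- A category of partitions: a collection `C ⊆ P` containing `⊔` and `|`,
closed under involution, tensor products and composition. -/
structure IsCategoryOfPartitions (C : ∀ k l : ℕ, Set (Part k l)) : Prop where
  pair_mem : pairPart ∈ C 0 2
  id_mem : idPart ∈ C 1 1
  invol_mem : ∀ {k l : ℕ} {p : Part k l}, p ∈ C k l → invol p ∈ C l k
  tensor_mem : ∀ {k l k' l' : ℕ} {p : Part k l} {q : Part k' l'},
      p ∈ C k l → q ∈ C k' l' → tensorPart p q ∈ C (k + k') (l + l')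
  comp_mem : ∀ {k l l' : ℕ} {p : Part k l} {q : Part l l'},
      p ∈ C k l → q ∈ C l l' → compPart p q ∈ C k l'

/-- The skew category of partitions generated by a family `E`. -/
def skewGenerated (E : ∀ k l : ℕ, Set (Part k l)) : ∀ k l : ℕ, Set (Part k l) :=
  fun k l => { p | ∀ R : ∀ k l : ℕ, Set (Part k l),
    IsSkewCategory R → (∀ k' l' : ℕ, E k' l' ⊆ R k' l') → p ∈ R k l }

/-- The category of partitions generated by a family `E`. -/
def catGenerated (E : ∀ k l : ℕ, Set (Part k l)) : ∀ k l : ℕ, Set (Part k l) :=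
  fun k l => { p | ∀ C : ∀ k l : ℕ, Set (Part k l),
    IsCategoryOfPartitions C → (∀ k' l' : ℕ, E k' l' ⊆ C k' l') → p ∈ C k l }

end GTQG
namespace GTQG

/-! ## The free products `ℤ₂^{*∞}` and `ℤ₂^{*n}` -/

/-- The cyclic group of order two (written multiplicatively). -/
abbrev Z2 : Type := Multiplicative (ZMod 2)

/-- `ℤ₂^{*∞}`, the free product of countably many copies of `ℤ₂`. -/
abbrev FreeZ2 : Type := Monoid.CoprodI (fun _ : ℕ => Z2)

/-- `ℤ₂^{*n}`, the free product of `n` copies of `ℤ₂`. -/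
abbrev FreeZ2n (n : ℕ) : Type := Monoid.CoprodI (fun _ : Fin n => Z2)

/-- The generator `a_i` of `ℤ₂^{*∞}`. -/
def gen (i : ℕ) : FreeZ2 := Monoid.CoprodI.of (i := i) (Multiplicative.ofAdd (1 : ZMod 2))

/-- The generator `a_i` of `ℤ₂^{*n}`. -/
def genn {n : ℕ} (i : Fin n) : FreeZ2n n :=
  Monoid.CoprodI.of (i := i) (Multiplicative.ofAdd (1 : ZMod 2))

/-- The word `a_i = a_{i₁} ⋯ a_{i_k} ∈ ℤ₂^{*∞}` associated to a multi-index. -/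
def aWord {k : ℕ} (i : Fin k → ℕ) : FreeZ2 := (List.ofFn fun x => gen (i x)).prod

/-- The word `a_i = a_{i₁} ⋯ a_{i_k} ∈ ℤ₂^{*n}` associated to a multi-index. -/
def aWordn {n k : ℕ} (i : Fin k → Fin n) : FreeZ2n n := (List.ofFn fun x => genn (i x)).prod

/-- The natural embedding `ℤ₂^{*n} → ℤ₂^{*∞}`. -/
def incl (n : ℕ) : FreeZ2n n →* FreeZ2 :=
  Monoid.CoprodI.lift (fun i => Monoid.CoprodI.of (M := fun _ : ℕ => Z2) (i := (i : ℕ)))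

/-- The endomorphism of `ℤ₂^{*∞}` induced by a map `σ : ℕ → ℕ`, `a_i ↦ a_{σ i}`.
For bijective `σ` this is the action of `S_∞`, in general that of `sS_∞`. -/
def permEndo (σ : ℕ → ℕ) : FreeZ2 →* FreeZ2 :=
  Monoid.CoprodI.lift (fun i => Monoid.CoprodI.of (M := fun _ : ℕ => Z2) (i := σ i))

/-- The endomorphism of `ℤ₂^{*n}` induced by a map `σ : Fin n → Fin n`. -/
def permEndon {n : ℕ} (σ : Fin n → Fin n) : FreeZ2n n →* FreeZ2n n :=
  Monoid.CoprodI.lift (fun i => Monoid.CoprodI.of (M := fun _ : Fin n => Z2) (i := σ i))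

/-- A map `ℕ → ℕ` is finitely supported (moves only finitely many points). -/
def FinitelySupported (σ : ℕ → ℕ) : Prop := {x | σ x ≠ x}.Finite

/-- `F_∞(D) = S_∞({a_{ind(p)} : p ∈ D(k,0)})`, the set of all words `a_i` with
`ker(i) ∈ D(k,0)` (the `S_∞`-orbit of the words of minimal-index labellings). -/
def Finfty (D : ∀ k l : ℕ, Set (Part k l)) : Set FreeZ2 :=
  { g | ∃ (k : ℕ) (i : Fin k → ℕ), kerPart0 i ∈ D k 0 ∧ g = aWord i }

end GTQG
namespace GTQG

/-! ## The maps `T̂_p` and `T_p` -/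

/-- `(ℂ^n)^{⊗k}`, realised as functions on multi-indices (the standard basis
`e_{i₁} ⊗ ⋯ ⊗ e_{i_k}` is indexed by multi-indices `i ∈ {1,…,n}^k`). -/
abbrev MV (n k : ℕ) : Type := (Fin k → Fin n) → ℂ

/-- `δ̂_p(i,j) = 1` iff `(i,j) ∈ S_∞(ind(p))`, i.e. iff `ker(i,j) = p`. -/
def hatDelta {k l : ℕ} (p : Part k l) {n : ℕ} (i : Fin k → Fin n) (j : Fin l → Fin n) : ℂ :=
  if kerPartA i j = p then 1 else 0

/-- `δ_p(i,j) = 1` iff `(i,j) ∈ sS_∞(ind(p))`, i.e. iff the labelling `(i,j)`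
is constant on the blocks of `p`. -/
def softDelta {k l : ℕ} (p : Part k l) {n : ℕ} (i : Fin k → Fin n) (j : Fin l → Fin n) : ℂ :=
  if p ≤ kerPartA i j then 1 else 0

/-- The linear map `T̂_p^(n) : (ℂ^n)^{⊗k} → (ℂ^n)^{⊗l}`. -/
def hatT (n : ℕ) {k l : ℕ} (p : Part k l) : MV n k →ₗ[ℂ] MV n l :=
  Matrix.mulVecLin (Matrix.of fun (j : Fin l → Fin n) (i : Fin k → Fin n) => hatDelta p i j)

/-- The linear map `T_p^(n) : (ℂ^n)^{⊗k} → (ℂ^n)^{⊗l}` of Banica–Speicher. -/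
def softT (n : ℕ) {k l : ℕ} (p : Part k l) : MV n k →ₗ[ℂ] MV n l :=
  Matrix.mulVecLin (Matrix.of fun (j : Fin l → Fin n) (i : Fin k → Fin n) => softDelta p i j)

/-- The tensor product of linear maps, under the identification
`(ℂ^n)^{⊗k} ⊗ (ℂ^n)^{⊗k'} ≅ (ℂ^n)^{⊗(k+k')}` of basis vectors
`(e_{i} ⊗ e_{f} ↦ e_{if}`, concatenation of multi-indices). -/
def tensorMap {n k l k' l' : ℕ} (S : MV n k →ₗ[ℂ] MV n l) (T : MV n k' →ₗ[ℂ] MV n l') :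
    MV n (k + k') →ₗ[ℂ] MV n (l + l') :=
  Matrix.mulVecLin (Matrix.of fun (x : Fin (l + l') → Fin n) (y : Fin (k + k') → Fin n) =>
    LinearMap.toMatrix' S (fun a => x (Fin.castAdd l' a)) (fun a => y (Fin.castAdd k' a)) *
    LinearMap.toMatrix' T (fun b => x (Fin.natAdd l b)) (fun b => y (Fin.natAdd k b)))

/-- The adjoint of a linear map `(ℂ^n)^{⊗k} → (ℂ^n)^{⊗l}` with respect to the
standard Hermitian inner products (conjugate-transpose of the matrix in the
standard bases). -/
def adjointMap {n k l : ℕ} (S : MV n k →ₗ[ℂ] MV n l) : MV n l →ₗ[ℂ] MV n k :=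
  Matrix.mulVecLin (LinearMap.toMatrix' S).conjTranspose

/-- The map `ζ : ℂ → (ℂ^n)^{⊗2}`, `1 ↦ Σᵢ eᵢ ⊗ eᵢ`. -/
def zetaMap (n : ℕ) : MV n 0 →ₗ[ℂ] MV n 2 :=
  Matrix.mulVecLin (Matrix.of fun (j : Fin 2 → Fin n) (_ : Fin 0 → Fin n) =>
    if j 0 = j 1 then (1 : ℂ) else 0)

/-- A tensor category with duals (of subspaces of `Hom((ℂ^n)^{⊗k}, (ℂ^n)^{⊗l})`). -/
structure IsTensorCategoryWithDuals (n : ℕ)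
    (H : ∀ k l : ℕ, Submodule ℂ (MV n k →ₗ[ℂ] MV n l)) : Prop where
  tensor_mem : ∀ {k l k' l' : ℕ} (S : MV n k →ₗ[ℂ] MV n l) (T : MV n k' →ₗ[ℂ] MV n l'),
      S ∈ H k l → T ∈ H k' l' → tensorMap S T ∈ H (k + k') (l + l')
  comp_mem : ∀ {k l l' : ℕ} (S : MV n k →ₗ[ℂ] MV n l) (T : MV n l →ₗ[ℂ] MV n l'),
      S ∈ H k l → T ∈ H l l' → T ∘ₗ S ∈ H k l'
  adjoint_mem : ∀ {k l : ℕ} (S : MV n k →ₗ[ℂ] MV n l), S ∈ H k l → adjointMap S ∈ H l k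
  id_mem : LinearMap.id ∈ H 1 1
  zeta_mem : zetaMap n ∈ H 0 2

/-- The collection of subspaces `span{T̂_p^(n) : p ∈ R(k,l)}`. -/
def spanOf (n : ℕ) (R : ∀ k l : ℕ, Set (Part k l)) :
    ∀ k l : ℕ, Submodule ℂ (MV n k →ₗ[ℂ] MV n l) :=
  fun k l => Submodule.span ℂ {T | ∃ p ∈ R k l, T = hatT n p}

/-- All connected tensor products of `p` and `q`. -/
def connTensorSet {k l k' l' : ℕ} (p : Part k l) (q : Part k' l') :
    Set (Part (k + k') (l + l')) :=
  { r | ∃ (i : Fin k → ℕ) (j : Fin l → ℕ) (f : Fin k' → ℕ) (g : Fin l' → ℕ),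
      kerPart i j = p ∧ kerPart f g = q ∧ r = kerPart (Fin.append i f) (Fin.append j g) }

/-- All connected conditioned compositions of `p` and `q`. -/
def connCompSet {k l l' : ℕ} (p : Part k l) (q : Part l l') : Set (Part k l') :=
  { r | ∃ (i : Fin k → ℕ) (h : Fin l → ℕ) (g : Fin l' → ℕ),
      kerPart i h = p ∧ kerPart h g = q ∧ r = kerPart i g }

end GTQG
namespace GTQG

/-! ### Auxiliary machinery for Statement 7 -/

section Aux

/-! #### Setoid kernel basics -/

lemma kerPartA_rel {α : Type*} {k l : ℕ} (i : Fin k → α) (j : Fin l → α)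
    (x y : Fin k ⊕ Fin l) :
    kerPartA i j x y ↔ Sum.elim i j x = Sum.elim i j y := Iff.rfl

lemma comap_ker' {α β γ : Type*} (f : α → β) (g : β → γ) :
    Setoid.comap f (Setoid.ker g) = Setoid.ker (g ∘ f) :=
  Setoid.ext fun _ _ => Iff.rfl

lemma invol_kerPartA {k l : ℕ} (i : Fin k → ℕ) (j : Fin l → ℕ) :
    invol (kerPartA i j) = kerPartA j i := by
  apply Setoid.ext
  rintro (x | x) (y | y) <;> exact Iff.rfl

lemma exists_kerPart_eq {k l : ℕ} (p : Part k l) :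
    ∃ (i : Fin k → ℕ) (j : Fin l → ℕ), kerPart i j = p := by
  classical
  let lab : (Fin k ⊕ Fin l) → ℕ := fun x => sInf (Encodable.encode '' {y | p x y})
  have key : ∀ x y, lab x = lab y ↔ p x y := by
    intro x y
    constructor
    · intro h
      have hx : lab x ∈ Encodable.encode '' {y' | p x y'} :=
        Nat.sInf_mem ⟨Encodable.encode x, ⟨x, p.refl x, rfl⟩⟩
      have hy : lab y ∈ Encodable.encode '' {y' | p y y'} :=
        Nat.sInf_mem ⟨Encodable.encode y, ⟨y, p.refl y, rfl⟩⟩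
      obtain ⟨u, hu, hue⟩ := hx
      obtain ⟨v, hv, hve⟩ := hy
      have : u = v := Encodable.encode_injective (by rw [hue, hve, h])
      exact p.trans hu (this ▸ (p.symm hv))
    · intro h
      have : {y' | p x y'} = {y' | p y y'} := by
        ext z; exact ⟨fun hz => p.trans (p.symm h) hz, fun hz => p.trans h hz⟩
      simp only [lab, this]
  refine ⟨lab ∘ Sum.inl, lab ∘ Sum.inr, ?_⟩
  apply Setoid.ext
  intro x y
  have hx : Sum.elim (lab ∘ Sum.inl) (lab ∘ Sum.inr) x = lab x := by cases x <;> rfl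
  have hy : Sum.elim (lab ∘ Sum.inl) (lab ∘ Sum.inr) y = lab y := by cases y <;> rfl
  rw [kerPartA_rel, hx, hy]
  exact key x y

/-! #### `GoodP`: pairs of rows realising a partition of `R` -/

variable {R : ∀ k l : ℕ, Set (Part k l)}

/-- `GoodP R L M` means that the partition obtained by labelling the upper row
by `L` and the lower row by `M` (points connected iff equal labels) is in `R`. -/
def GoodP (R : ∀ k l : ℕ, Set (Part k l)) (L M : List ℕ) : Prop :=
  ∃ (a b : ℕ) (i : Fin a → ℕ) (j : Fin b → ℕ),
    List.ofFn i = L ∧ List.ofFn j = M ∧ kerPart i j ∈ R a b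

lemma GoodP.elim_mem {L M : List ℕ} (h : GoodP R L M)
    {a b : ℕ} {i : Fin a → ℕ} {j : Fin b → ℕ}
    (hi : List.ofFn i = L) (hj : List.ofFn j = M) : kerPart i j ∈ R a b := by
  obtain ⟨a', b', i', j', hi', hj', hmem⟩ := h
  have ha : a = a' := by
    rw [← List.length_ofFn (f := i), ← List.length_ofFn (f := i'), hi, hi']
  subst ha
  have hb : b = b' := by
    rw [← List.length_ofFn (f := j), ← List.length_ofFn (f := j'), hj, hj']
  subst hb
  obtain rfl : i = i' := List.ofFn_injective (hi.trans hi'.symm)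
  obtain rfl : j = j' := List.ofFn_injective (hj.trans hj'.symm)
  exact hmem

variable (hR : IsSkewCategory R)
include hR

lemma GoodP.tensor {L1 M1 L2 M2 : List ℕ} (h1 : GoodP R L1 M1) (h2 : GoodP R L2 M2) :
    GoodP R (L1 ++ L2) (M1 ++ M2) := by
  obtain ⟨a, b, i, j, rfl, rfl, hm1⟩ := h1
  obtain ⟨a', b', f, g, rfl, rfl, hm2⟩ := h2
  exact ⟨a + a', b + b', Fin.append i f, Fin.append j g,
    List.ofFn_fin_append i f, List.ofFn_fin_append j g,
    hR.conn_tensor_mem i j f g hm1 hm2 rfl rfl⟩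

lemma GoodP.invol {L M : List ℕ} (h : GoodP R L M) : GoodP R M L := by
  obtain ⟨a, b, i, j, rfl, rfl, hm⟩ := h
  refine ⟨b, a, j, i, rfl, rfl, ?_⟩
  have h2 := hR.invol_mem hm
  rwa [show GTQG.invol (kerPartA i j) = kerPartA j i from invol_kerPartA i j] at h2

omit hR

lemma compatible_kerPart {k l l' : ℕ} (i : Fin k → ℕ) (h : Fin l → ℕ) (g : Fin l' → ℕ) :
    Compatible (kerPart i h) (kerPart h g) :=
  Setoid.ext fun _ _ => Iff.rfl

lemma compPart_kerPart {k l l' : ℕ} (i : Fin k → ℕ) (h : Fin l → ℕ) (g : Fin l' → ℕ)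
    (hsh : ∀ a b, i a = g b → ∃ m, h m = i a) :
    compPart (kerPart i h) (kerPart h g) = kerPart i g := by
  apply Setoid.ext
  intro x y
  constructor
  · intro hxy
    have key : ∀ u v, Relation.EqvGen (compRel (kerPart i h) (kerPart h g)) u v →
        Sum.elim i (Sum.elim h g) u = Sum.elim i (Sum.elim h g) v := by
      intro u v huv
      induction huv with
      | rel u v hr =>
        rcases hr with ⟨a, b, hab, rfl, rfl⟩ | ⟨a, b, hab, rfl, rfl⟩
        · have : Sum.elim i h a = Sum.elim i h b := hab
          cases a <;> cases b <;> simpa [topIncl] using this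
        · have : Sum.elim h g a = Sum.elim h g b := hab
          cases a <;> cases b <;> simpa [botIncl] using this
      | refl u => rfl
      | symm u v _ ih => exact ih.symm
      | trans u v w _ _ ih1 ih2 => exact ih1.trans ih2
    have hk := key _ _ hxy
    cases x <;> cases y <;> exact hk
  · intro hxy
    show Relation.EqvGen (compRel (kerPart i h) (kerPart h g))
      (Sum.map id Sum.inr x) (Sum.map id Sum.inr y)
    have conn : ∀ (a : Fin k) (b : Fin l'), i a = g b →
        Relation.EqvGen (compRel (kerPart i h) (kerPart h g))
          (Sum.inl a) (Sum.inr (Sum.inr b)) := by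
      intro a b hab
      obtain ⟨m, hm⟩ := hsh a b hab
      refine Relation.EqvGen.trans _ (Sum.inr (Sum.inl m)) _ ?_ ?_
      · exact Relation.EqvGen.rel _ _
          (Or.inl ⟨Sum.inl a, Sum.inr m, show i a = h m from hm.symm, rfl, rfl⟩)
      · exact Relation.EqvGen.rel _ _
          (Or.inr ⟨Sum.inl m, Sum.inr b, show h m = g b from hm.trans hab, rfl, rfl⟩)
    rcases x with a | a <;> rcases y with b | b
    · exact Relation.EqvGen.rel _ _
        (Or.inl ⟨Sum.inl a, Sum.inl b, show i a = i b from hxy, rfl, rfl⟩)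
    · exact conn a b hxy
    · exact Relation.EqvGen.symm _ _ (conn b a (Eq.symm hxy))
    · exact Relation.EqvGen.rel _ _
        (Or.inr ⟨Sum.inr a, Sum.inr b, show g a = g b from hxy, rfl, rfl⟩)

include hR

lemma GoodP.comp {L M N : List ℕ} (h1 : GoodP R L M) (h2 : GoodP R M N)
    (hsh : ∀ c, c ∈ L → c ∈ N → c ∈ M) : GoodP R L N := by
  obtain ⟨a, b, i, h, hi, hh, hm1⟩ := h1
  obtain ⟨b', c', h', g, hh', hg, hm2⟩ := h2
  have hb : b = b' := by
    rw [← List.length_ofFn (f := h), ← List.length_ofFn (f := h'), hh, hh']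
  subst hb
  obtain rfl : h = h' := List.ofFn_injective (hh.trans hh'.symm)
  have hcomp := hR.cond_comp_mem hm1 hm2 (compatible_kerPart i h g)
  have heq : compPart (kerPart i h) (kerPart h g) = kerPart i g := by
    apply compPart_kerPart
    intro x y hxy
    have hx : i x ∈ M := by
      apply hsh
      · rw [← hi]; exact List.mem_ofFn.mpr ⟨x, rfl⟩
      · rw [hxy, ← hg]; exact List.mem_ofFn.mpr ⟨y, rfl⟩
    rw [← hh] at hx
    obtain ⟨m, hm⟩ := List.mem_ofFn.mp hx
    exact ⟨m, hm⟩
  exact ⟨a, c', i, g, hi, hg, heq ▸ hcomp⟩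

/-! #### Basic good pairs -/

lemma goodP_single (c : ℕ) : GoodP R [c] [c] := by
  refine ⟨1, 1, fun _ => c, fun _ => c, rfl, rfl, ?_⟩
  have : kerPart (fun _ : Fin 1 => c) (fun _ : Fin 1 => c) = idPart := by
    apply Setoid.ext
    rintro (x | x) (y | y) <;> exact ⟨fun _ => rfl, fun _ => rfl⟩
  rw [this]; exact hR.id_mem

lemma goodP_pair (c : ℕ) : GoodP R [] [c, c] := by
  refine ⟨0, 2, Fin.elim0, fun _ => c, List.ofFn_zero, rfl, ?_⟩
  have : kerPart Fin.elim0 (fun _ : Fin 2 => c) = pairPart := by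
    apply Setoid.ext
    rintro (x | x) (y | y)
    · exact x.elim0
    · exact x.elim0
    · exact y.elim0
    · exact ⟨fun _ => rfl, fun _ => rfl⟩
  rw [this]; exact hR.pair_mem

lemma goodP_copair (c : ℕ) : GoodP R [c, c] [] := (goodP_pair hR c).invol hR

lemma goodP_nil : GoodP R [] [] :=
  (goodP_pair hR 0).comp hR (goodP_copair hR 0) (fun _ h _ => absurd h (List.not_mem_nil))

lemma goodP_diag (M : List ℕ) : GoodP R M M := by
  induction M with
  | nil => exact goodP_nil hR
  | cons c M ih => exact (goodP_single hR c).tensor hR ih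

/-! #### Rotations at the level of rows -/

lemma GoodP.rotDLU' {L M : List ℕ} {c : ℕ} (h : GoodP R L (c :: M)) :
    GoodP R (c :: L) M := by
  have u : GoodP R (c :: L) (c :: c :: M) := (goodP_single hR c).tensor hR h
  have v : GoodP R (c :: c :: M) M := (goodP_copair hR c).tensor hR (goodP_diag hR M)
  exact u.comp hR v (fun d _ hd => List.mem_cons_of_mem _ (List.mem_cons_of_mem _ hd))

lemma GoodP.rotULD' {L M : List ℕ} {c : ℕ} (h : GoodP R (c :: L) M) :
    GoodP R L (c :: M) := by
  have u : GoodP R L (c :: c :: L) := (goodP_pair hR c).tensor hR (goodP_diag hR L)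
  have v : GoodP R (c :: c :: L) (c :: M) := (goodP_single hR c).tensor hR h
  exact u.comp hR v (fun d hd _ => List.mem_cons_of_mem _ (List.mem_cons_of_mem _ hd))

lemma GoodP.rotDRU' {L M : List ℕ} {c : ℕ} (h : GoodP R L (M ++ [c])) :
    GoodP R (L ++ [c]) M := by
  have u : GoodP R (L ++ [c]) (M ++ [c, c]) := by
    have := h.tensor hR (goodP_single hR c)
    simpa [List.append_assoc] using this
  have v : GoodP R (M ++ [c, c]) M := by
    have := (goodP_diag hR M).tensor hR (goodP_copair hR c)
    simpa using this
  exact u.comp hR v (fun d _ hd => List.mem_append_left _ hd)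

lemma GoodP.rotURD' {L M : List ℕ} {c : ℕ} (h : GoodP R (L ++ [c]) M) :
    GoodP R L (M ++ [c]) := by
  have u : GoodP R L (L ++ [c, c]) := by
    have := (goodP_diag hR L).tensor hR (goodP_pair hR c)
    simpa using this
  have v : GoodP R (L ++ [c, c]) (M ++ [c]) := by
    have := h.tensor hR (goodP_single hR c)
    simpa [List.append_assoc] using this
  exact u.comp hR v (fun d hd _ => List.mem_append_left _ hd)

/-! #### Insertion/deletion of pairs, reversal, conjugation -/

lemma GoodP.insert_pair {A B : List ℕ} (c : ℕ) (h : GoodP R (A ++ B) []) :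
    GoodP R (A ++ c :: c :: B) [] := by
  have u : GoodP R (A ++ c :: c :: B) (A ++ B) := by
    have := ((goodP_diag hR A).tensor hR (goodP_copair hR c)).tensor hR (goodP_diag hR B)
    simpa [List.append_assoc] using this
  exact u.comp hR h (fun d _ hd => absurd hd (List.not_mem_nil))

lemma GoodP.delete_pair {A B : List ℕ} (c : ℕ) (h : GoodP R (A ++ c :: c :: B) []) :
    GoodP R (A ++ B) [] := by
  have u : GoodP R (A ++ B) (A ++ c :: c :: B) := by
    have := ((goodP_diag hR A).tensor hR (goodP_pair hR c)).tensor hR (goodP_diag hR B)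
    simpa [List.append_assoc] using this
  exact u.comp hR h (fun d _ hd => absurd hd (List.not_mem_nil))

lemma GoodP.flatten_rev : ∀ (M L : List ℕ), GoodP R L M → GoodP R (M.reverse ++ L) [] := by
  intro M
  induction M with
  | nil => exact fun L h => by simpa using h
  | cons c M ih =>
    intro L h
    have := ih (c :: L) (h.rotDLU' hR)
    simpa [List.append_assoc] using this

lemma GoodP.reverse {L : List ℕ} (h : GoodP R L []) : GoodP R L.reverse [] := by
  have := GoodP.flatten_rev hR L [] (h.invol hR)
  simpa using this

lemma GoodP.cyclic {X : List ℕ} {c : ℕ} (h : GoodP R (X ++ [c]) []) :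
    GoodP R (c :: X) [] := by
  have h1 : GoodP R X [c] := by
    have := h.rotURD' hR (M := [])
    simpa using this
  exact h1.rotDLU' hR

lemma GoodP.conj_single {L : List ℕ} (c : ℕ) (h : GoodP R L []) :
    GoodP R (c :: (L ++ [c])) [] := by
  have h1 : GoodP R (L ++ [c, c]) [] := by
    have h0 : GoodP R (L ++ []) [] := by simpa using h
    have := h0.insert_pair hR (A := L) (B := []) c
    simpa using this
  have h2 : GoodP R ((L ++ [c]) ++ [c]) [] := by
    simpa [List.append_assoc] using h1
  exact h2.cyclic hR

lemma GoodP.conj : ∀ (u L : List ℕ), GoodP R L [] → GoodP R (u ++ L ++ u.reverse) [] := by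
  intro u
  induction u with
  | nil => intro L h; simpa using h
  | cons c u ih =>
    intro L h
    have h1 := (ih L h).conj_single hR c
    have heq : (c :: u) ++ L ++ (c :: u).reverse = c :: ((u ++ L ++ u.reverse) ++ [c]) := by
      simp [List.append_assoc]
    rw [heq]
    exact h1

end Aux


section Words

variable {R : ∀ k l : ℕ, Set (Part k l)}

/-- The word in `ℤ₂^{*∞}` associated to a list of letters. -/
def wp (L : List ℕ) : FreeZ2 := (L.map gen).prod

lemma wp_nil : wp [] = 1 := rfl

lemma wp_append (L M : List ℕ) : wp (L ++ M) = wp L * wp M := by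
  simp [wp]

lemma wp_cons (c : ℕ) (L : List ℕ) : wp (c :: L) = gen c * wp L := by
  simp [wp]

lemma gen_mul_self (c : ℕ) : gen c * gen c = 1 := by
  rw [gen, ← MonoidHom.map_mul]
  have h1 : (Multiplicative.ofAdd (1 : ZMod 2)) * Multiplicative.ofAdd (1 : ZMod 2) = 1 := by
    decide
  rw [h1, MonoidHom.map_one]

lemma gen_inv (c : ℕ) : (gen c)⁻¹ = gen c :=
  inv_eq_of_mul_eq_one_right (gen_mul_self c)

lemma wp_reverse (L : List ℕ) : wp L.reverse = (wp L)⁻¹ := by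
  induction L with
  | nil => simp [wp]
  | cons c L ih =>
    rw [List.reverse_cons, wp_append, ih,
      show wp (c :: L) = gen c * wp L from wp_cons c L, mul_inv_rev, gen_inv]
    simp [wp]

lemma aWord_eq_wp {k : ℕ} (i : Fin k → ℕ) : aWord i = wp (List.ofFn i) := by
  simp [aWord, wp, List.map_ofFn]
  rfl

example : (GoodP (fun _ _ => Set.univ) [] []) ∨ True := Or.inr trivial

lemma mem_Finfty_iff {g : FreeZ2} :
    g ∈ Finfty R ↔ ∃ L, GoodP R L [] ∧ g = wp L := by
  constructor
  · rintro ⟨k, i, hmem, rfl⟩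
    exact ⟨List.ofFn i, ⟨k, 0, i, Fin.elim0, rfl, List.ofFn_zero, hmem⟩, aWord_eq_wp i⟩
  · rintro ⟨L, ⟨a, b, i, j, hi, hj, hmem⟩, rfl⟩
    have hb : b = 0 := by
      have := congrArg List.length hj
      simpa using this
    subst hb
    have hj0 : j = Fin.elim0 := funext fun x => x.elim0
    subst hj0
    exact ⟨a, i, hmem, by rw [aWord_eq_wp, hi]⟩

/-! #### Reduced words -/

lemma not_chain'_decomp : ∀ {L : List ℕ}, ¬ List.Chain' (· ≠ ·) L →
    ∃ A c B, L = A ++ c :: c :: B := by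
  intro L
  induction L with
  | nil => intro h; exact absurd List.isChain_nil h
  | cons a T ih =>
    intro h
    match T, h with
    | [], h => exact absurd (List.isChain_singleton a) h
    | b :: T, h =>
      simp only [List.Chain', List.isChain_cons_cons] at h
      push_neg at h
      by_cases hab : a = b
      · subst hab; exact ⟨[], a, T, rfl⟩
      · obtain ⟨A, c, B, hd⟩ := ih (h hab)
        exact ⟨a :: A, c, B, by rw [hd]; rfl⟩

lemma exists_reduced (hR : IsSkewCategory R) :
    ∀ (n : ℕ) (L : List ℕ), L.length ≤ n →
    ∃ L', List.Chain' (· ≠ ·) L' ∧ wp L' = wp L ∧ (GoodP R L [] ↔ GoodP R L' []) := by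
  intro n
  induction n with
  | zero =>
    intro L hL
    rw [Nat.le_zero, List.length_eq_zero_iff] at hL
    subst hL
    exact ⟨[], List.isChain_nil, rfl, Iff.rfl⟩
  | succ n ih =>
    intro L hL
    by_cases hc : List.Chain' (· ≠ ·) L
    · exact ⟨L, hc, rfl, Iff.rfl⟩
    · obtain ⟨A, c, B, rfl⟩ := not_chain'_decomp hc
      have hlen : (A ++ B).length ≤ n := by
        simp only [List.length_append, List.length_cons] at hL ⊢
        omega
      obtain ⟨L', h1, h2, h3⟩ := ih (A ++ B) hlen
      refine ⟨L', h1, ?_, ?_⟩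
      · rw [h2, wp_append, wp_append, wp_cons, wp_cons, ← mul_assoc, ← mul_assoc,
          mul_assoc (wp A), gen_mul_self, mul_one]
      · constructor
        · intro h; exact h3.mp (GoodP.delete_pair hR c h)
        · intro h; exact GoodP.insert_pair hR c (h3.mpr h)

/-- The reduced `CoprodI.Word` of a chain of distinct letters. -/
def toRedWord (L : List ℕ) (h : List.Chain' (· ≠ ·) L) :
    Monoid.CoprodI.Word (fun _ : ℕ => Z2) where
  toList := L.map fun c => ⟨c, Multiplicative.ofAdd 1⟩
  ne_one := by
    intro l hl
    obtain ⟨c, _, rfl⟩ := List.mem_map.mp hl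
    show (Multiplicative.ofAdd (1 : ZMod 2)) ≠ 1
    decide
  chain_ne := by
    rw [List.isChain_map]
    exact h

lemma toRedWord_prod (L : List ℕ) (h : List.Chain' (· ≠ ·) L) :
    (toRedWord L h).prod = wp L := by
  simp only [Monoid.CoprodI.Word.prod, toRedWord, List.map_map, wp]
  rfl

lemma reduced_inj {L L' : List ℕ} (h : List.Chain' (· ≠ ·) L)
    (h' : List.Chain' (· ≠ ·) L') (hw : wp L = wp L') : L = L' := by
  have hprod : (toRedWord L h).prod = (toRedWord L' h').prod := by
    rw [toRedWord_prod, toRedWord_prod, hw]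
  have hinj : Function.Injective
      (Monoid.CoprodI.Word.prod (M := fun _ : ℕ => Z2)) := by
    intro w w' hww
    have : Monoid.CoprodI.Word.equiv.symm w = Monoid.CoprodI.Word.equiv.symm w' := hww
    exact Monoid.CoprodI.Word.equiv.symm.injective this
  have := hinj hprod
  have hlist := congrArg (fun w : Monoid.CoprodI.Word (fun _ : ℕ => Z2) =>
    w.toList.map Sigma.fst) this
  have key : ∀ X : List ℕ,
      (X.map fun c => (⟨c, Multiplicative.ofAdd 1⟩ : Σ _ : ℕ, Z2)).map Sigma.fst = X := by
    intro X
    induction X with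
    | nil => rfl
    | cons a X ih => simp only [List.map_cons, ih]
  rw [← key L, ← key L']
  exact hlist

lemma goodP_of_wp_eq (hR : IsSkewCategory R) {L L' : List ℕ}
    (h : GoodP R L []) (hw : wp L = wp L') : GoodP R L' [] := by
  obtain ⟨A, hA, hwA, hGA⟩ := exists_reduced hR L.length L le_rfl
  obtain ⟨B, hB, hwB, hGB⟩ := exists_reduced hR L'.length L' le_rfl
  have hAB : A = B := reduced_inj hA hB (by rw [hwA, hwB, hw])
  exact hGB.mpr (hAB ▸ hGA.mp h)

end Words
section Rot

variable {R : ∀ k l : ℕ, Set (Part k l)}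

/-! #### Rotations as relabellings -/

lemma rotDLU_ker {k l : ℕ} (i : Fin k → ℕ) (v : Fin (l + 1) → ℕ) :
    rotDLU (kerPart i v) = kerPart (Fin.cons (v 0) i) (v ∘ Fin.succ) := by
  show Setoid.comap _ (Setoid.ker _) = Setoid.ker _
  rw [comap_ker']
  apply congrArg Setoid.ker
  funext x
  rcases x with x | y
  · induction x using Fin.cases <;> simp [rotDLUmap]
  · rfl

lemma rotULD_ker {k l : ℕ} (u : Fin (k + 1) → ℕ) (j : Fin l → ℕ) :
    rotULD (kerPart u j) = kerPart (u ∘ Fin.succ) (Fin.cons (u 0) j) := by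
  show Setoid.comap _ (Setoid.ker _) = Setoid.ker _
  rw [comap_ker']
  apply congrArg Setoid.ker
  funext x
  rcases x with x | y
  · rfl
  · induction y using Fin.cases <;> simp [rotULDmap]

lemma rotDRU_ker {k l : ℕ} (i : Fin k → ℕ) (v : Fin (l + 1) → ℕ) :
    rotDRU (kerPart i v) = kerPart (Fin.snoc i (v (Fin.last l))) (v ∘ Fin.castSucc) := by
  show Setoid.comap _ (Setoid.ker _) = Setoid.ker _
  rw [comap_ker']
  apply congrArg Setoid.ker
  funext x
  rcases x with x | y
  · induction x using Fin.lastCases <;> simp [rotDRUmap]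
  · rfl

lemma rotURD_ker {k l : ℕ} (u : Fin (k + 1) → ℕ) (j : Fin l → ℕ) :
    rotURD (kerPart u j) = kerPart (u ∘ Fin.castSucc) (Fin.snoc j (u (Fin.last k))) := by
  show Setoid.comap _ (Setoid.ker _) = Setoid.ker _
  rw [comap_ker']
  apply congrArg Setoid.ker
  funext x
  rcases x with x | y
  · rfl
  · induction y using Fin.lastCases <;> simp [rotURDmap]

lemma ofFn_cons {m : ℕ} (c : ℕ) (i : Fin m → ℕ) :
    List.ofFn (Fin.cons c i : Fin (m + 1) → ℕ) = c :: List.ofFn i := by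
  rw [List.ofFn_succ]
  simp

lemma ofFn_snoc {m : ℕ} (c : ℕ) (i : Fin m → ℕ) :
    List.ofFn (Fin.snoc i c : Fin (m + 1) → ℕ) = List.ofFn i ++ [c] := by
  rw [List.ofFn_succ']
  simp [List.concat_eq_append, Fin.snoc_castSucc, Fin.snoc_last]

lemma basicRot_mem (hR : IsSkewCategory R) {s t : Σ k l : ℕ, Part k l}
    (hst : BasicRot s t) (hs : s.2.2 ∈ R s.1 s.2.1) : t.2.2 ∈ R t.1 t.2.1 := by
  cases hst with
  | uld p =>
    obtain ⟨u, j, rfl⟩ := exists_kerPart_eq p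
    show rotULD _ ∈ R _ _
    rw [rotULD_ker]
    have h1 : GoodP R (List.ofFn u) (List.ofFn j) := ⟨_, _, u, j, rfl, rfl, hs⟩
    rw [List.ofFn_succ] at h1
    exact (h1.rotULD' hR).elim_mem rfl (ofFn_cons _ _)
  | dlu p =>
    obtain ⟨i, v, rfl⟩ := exists_kerPart_eq p
    show rotDLU _ ∈ R _ _
    rw [rotDLU_ker]
    have h1 : GoodP R (List.ofFn i) (List.ofFn v) := ⟨_, _, i, v, rfl, rfl, hs⟩
    rw [List.ofFn_succ (f := v)] at h1
    exact (h1.rotDLU' hR).elim_mem (ofFn_cons _ _) rfl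
  | urd p =>
    obtain ⟨u, j, rfl⟩ := exists_kerPart_eq p
    show rotURD _ ∈ R _ _
    rw [rotURD_ker]
    have h1 : GoodP R (List.ofFn u) (List.ofFn j) := ⟨_, _, u, j, rfl, rfl, hs⟩
    have hu : List.ofFn u = List.ofFn (u ∘ Fin.castSucc) ++ [u (Fin.last _)] := by
      rw [← ofFn_snoc]
      exact congrArg List.ofFn (Fin.snoc_init_self u).symm
    rw [hu] at h1
    exact (h1.rotURD' hR).elim_mem rfl (ofFn_snoc _ _)
  | dru p =>
    obtain ⟨i, v, rfl⟩ := exists_kerPart_eq p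
    show rotDRU _ ∈ R _ _
    rw [rotDRU_ker]
    have h1 : GoodP R (List.ofFn i) (List.ofFn v) := ⟨_, _, i, v, rfl, rfl, hs⟩
    have hv : List.ofFn v = List.ofFn (v ∘ Fin.castSucc) ++ [v (Fin.last _)] := by
      rw [← ofFn_snoc]
      exact congrArg List.ofFn (Fin.snoc_init_self v).symm
    rw [hv] at h1
    exact (h1.rotDRU' hR).elim_mem (ofFn_snoc _ _) rfl

lemma mem_of_rtg (hR : IsSkewCategory R) {s t : Σ k l : ℕ, Part k l}
    (h : Relation.ReflTransGen BasicRot s t) (hs : s.2.2 ∈ R s.1 s.2.1) :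
    t.2.2 ∈ R t.1 t.2.1 := by
  induction h with
  | refl => exact hs
  | tail _ h2 ih => exact basicRot_mem hR h2 ih

/-! #### Rotation maps are surjective, block counts -/

lemma rotDLUmap_rotULDmap {k l : ℕ} (x : Fin k ⊕ Fin (l + 1)) :
    rotDLUmap k l (rotULDmap k l x) = x := by
  rcases x with x | y
  · simp [rotULDmap, rotDLUmap]
  · induction y using Fin.cases <;> simp [rotULDmap, rotDLUmap]

lemma rotULDmap_rotDLUmap {k l : ℕ} (x : Fin (k + 1) ⊕ Fin l) :
    rotULDmap k l (rotDLUmap k l x) = x := by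
  rcases x with x | y
  · induction x using Fin.cases <;> simp [rotULDmap, rotDLUmap]
  · simp [rotULDmap, rotDLUmap]

lemma rotDRUmap_rotURDmap {k l : ℕ} (x : Fin k ⊕ Fin (l + 1)) :
    rotDRUmap k l (rotURDmap k l x) = x := by
  rcases x with x | y
  · simp [rotURDmap, rotDRUmap]
  · induction y using Fin.lastCases <;> simp [rotURDmap, rotDRUmap]

lemma rotURDmap_rotDRUmap {k l : ℕ} (x : Fin (k + 1) ⊕ Fin l) :
    rotURDmap k l (rotDRUmap k l x) = x := by
  rcases x with x | y
  · induction x using Fin.lastCases <;> simp [rotURDmap, rotDRUmap]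
  · simp [rotURDmap, rotDRUmap]

lemma rotULD_rotDLU {k l : ℕ} (p : Part k (l + 1)) : rotULD (rotDLU p) = p := by
  apply Setoid.ext
  intro x y
  show p (rotDLUmap k l (rotULDmap k l x)) (rotDLUmap k l (rotULDmap k l y)) ↔ p x y
  rw [rotDLUmap_rotULDmap, rotDLUmap_rotULDmap]

lemma blockCount_comap {α β : Type*} (f : α → β) (hf : Function.Surjective f)
    (r : Setoid β) : Nat.card (Quotient (Setoid.comap f r)) = Nat.card (Quotient r) := by
  have e1 := Setoid.comapQuotientEquiv f r
  have huniv : Set.range (@Quotient.mk'' _ r ∘ f) = Set.univ := by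
    rw [Set.range_comp, hf.range_eq, Set.image_univ]
    exact Set.range_eq_univ.mpr Quotient.mk''_surjective
  rw [huniv] at e1
  exact Nat.card_congr (e1.trans (Equiv.Set.univ _))

lemma blockCount_basicRot {s t : Σ k l : ℕ, Part k l} (hst : BasicRot s t) :
    blockCount t.2.2 = blockCount s.2.2 := by
  cases hst with
  | uld p => exact blockCount_comap _ (fun y => ⟨rotDLUmap _ _ y, rotULDmap_rotDLUmap y⟩) p
  | dlu p => exact blockCount_comap _ (fun y => ⟨rotULDmap _ _ y, rotDLUmap_rotULDmap y⟩) p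
  | urd p => exact blockCount_comap _ (fun y => ⟨rotDRUmap _ _ y, rotURDmap_rotDRUmap y⟩) p
  | dru p => exact blockCount_comap _ (fun y => ⟨rotURDmap _ _ y, rotDRUmap_rotURDmap y⟩) p

lemma blockCount_of_rtg {s t : Σ k l : ℕ, Part k l}
    (h : Relation.ReflTransGen BasicRot s t) : blockCount t.2.2 = blockCount s.2.2 := by
  induction h with
  | refl => rfl
  | tail _ h2 ih => exact (blockCount_basicRot h2).trans ih

/-! #### Flattening a partition to one row -/

lemma flatten_exists (hR : IsSkewCategory R) :
    ∀ (l k : ℕ) (p : Part k l), ∃ (m : ℕ) (σ : Part m 0),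
      IsRotationOf ⟨k, l, p⟩ ⟨m, 0, σ⟩ ∧ blockCount σ = blockCount p ∧
        (p ∈ R k l → σ ∈ R m 0) := by
  intro l
  induction l with
  | zero => exact fun k p => ⟨k, p, Relation.ReflTransGen.refl, rfl, id⟩
  | succ l ih =>
    intro k p
    obtain ⟨m, σ, hrot, hbc, hmem⟩ := ih (k + 1) (rotDLU p)
    refine ⟨m, σ, ?_, ?_, ?_⟩
    · have step : BasicRot ⟨k + 1, l, rotDLU p⟩ ⟨k, l + 1, p⟩ := by
        have h0 := BasicRot.uld (rotDLU p)
        rwa [rotULD_rotDLU] at h0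
      exact hrot.tail step
    · rw [hbc]
      exact blockCount_basicRot (BasicRot.dlu p)
    · intro hp
      exact hmem (basicRot_mem hR (BasicRot.dlu p) hp)

/-! #### Block counts and `Fin n`-labellings -/

lemma blockCount_kerPart0_le {n m : ℕ} (i : Fin m → Fin n) :
    blockCount (kerPart0 fun x => (i x : ℕ)) ≤ n := by
  have e : Quotient (kerPart0 fun x => (i x : ℕ)) ≃
      Set.range (Sum.elim (fun x => ((i x : ℕ))) (Fin.elim0 : Fin 0 → ℕ)) :=
    Setoid.quotientKerEquivRange _
  rw [blockCount, Nat.card_congr e]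
  have hsub : Set.range (Sum.elim (fun x => ((i x : ℕ))) (Fin.elim0 : Fin 0 → ℕ)) ⊆
      Set.Iio n := by
    rintro z ⟨x | x, rfl⟩
    · exact (i x).isLt
    · exact x.elim0
  calc Nat.card (Set.range (Sum.elim (fun x => ((i x : ℕ))) (Fin.elim0 : Fin 0 → ℕ)))
      ≤ Nat.card (Set.Iio n) := Nat.card_mono (Set.finite_Iio n) hsub
    _ = n := by rw [Nat.card_coe_set_eq, Set.ncard_Iio_nat]

lemma exists_fin_label {m n : ℕ} (σ : Part m 0) (h : blockCount σ ≤ n) :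
    ∃ i : Fin m → Fin n, kerPart0 (fun x => (i x : ℕ)) = σ := by
  have hfin : Finite (Quotient σ) := Quotient.finite _
  haveI := Fintype.ofFinite (Quotient σ)
  have hcard : Fintype.card (Quotient σ) ≤ Fintype.card (Fin n) := by
    rw [Fintype.card_fin, ← Nat.card_eq_fintype_card]
    exact h
  obtain ⟨f⟩ := Function.Embedding.nonempty_of_card_le hcard
  refine ⟨fun x => f (Quotient.mk σ (Sum.inl x)), ?_⟩
  apply Setoid.ext
  rintro (x | x) (y | y)
  · constructor
    · intro hf
      have h2 : f (Quotient.mk σ (Sum.inl x)) = f (Quotient.mk σ (Sum.inl y)) :=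
        Fin.val_injective hf
      exact Quotient.exact (f.injective h2)
    · intro hxy
      exact congrArg (fun q => ((f q : Fin n) : ℕ)) (Quotient.sound hxy)
  · exact y.elim0
  · exact x.elim0
  · exact x.elim0

end Rot

section Groups

variable {R : ∀ k l : ℕ, Set (Part k l)}

/-- The word in `ℤ₂^{*n}` associated to a list of letters. -/
def wpn {n : ℕ} (u : List (Fin n)) : FreeZ2n n := (u.map genn).prod

lemma incl_genn {n : ℕ} (i : Fin n) : incl n (genn i) = gen (i : ℕ) := by
  simp [incl, genn, gen, Monoid.CoprodI.lift_of]

lemma incl_wpn {n : ℕ} (u : List (Fin n)) :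
    incl n (wpn u) = wp (u.map Fin.val) := by
  induction u with
  | nil => simp [wpn, wp]
  | cons c u ih =>
    rw [show wpn (c :: u) = genn c * wpn u from by simp [wpn],
      map_mul, ih, incl_genn, List.map_cons, wp_cons]

lemma exists_wpn {n : ℕ} (g : FreeZ2n n) : ∃ u : List (Fin n), g = wpn u := by
  induction g using Monoid.CoprodI.induction_on with
  | one => exact ⟨[], rfl⟩
  | of i x =>
    rcases (show ∀ y : Z2, y = 1 ∨ y = Multiplicative.ofAdd 1 by decide) x with h | h
    · exact ⟨[], by rw [h, map_one]; rfl⟩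
    · exact ⟨[i], by rw [h]; simp [wpn, genn]⟩
  | mul x y hx hy =>
    obtain ⟨u, rfl⟩ := hx
    obtain ⟨v, rfl⟩ := hy
    exact ⟨u ++ v, by simp [wpn]⟩

lemma GoodP.relabel {L : List ℕ} {τ : ℕ → ℕ} (hτ : Function.Injective τ)
    (h : GoodP R L []) : GoodP R (L.map τ) [] := by
  obtain ⟨a, b, i, j, rfl, hj, hmem⟩ := h
  have hb : b = 0 := by
    have := congrArg List.length hj
    simpa using this
  subst hb
  have hj0 : j = Fin.elim0 := funext fun x => x.elim0
  subst hj0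
  have hker : kerPart (τ ∘ i) Fin.elim0 = kerPart i Fin.elim0 := by
    apply Setoid.ext
    rintro (x | x) (y | y)
    · exact hτ.eq_iff
    · exact y.elim0
    · exact x.elim0
    · exact x.elim0
  exact ⟨a, 0, τ ∘ i, Fin.elim0, (List.map_ofFn (f := i) (g := τ)).symm, hj,
    Set.mem_of_eq_of_mem hker hmem⟩

/-- Extension of a map `Fin n → Fin n` to `ℕ` by the identity. -/
def extFun (n : ℕ) (σ : Fin n → Fin n) : ℕ → ℕ := fun m =>
  if h : m < n then (σ ⟨m, h⟩ : ℕ) else m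

lemma extFun_coe {n : ℕ} (σ : Fin n → Fin n) (i : Fin n) :
    extFun n σ (i : ℕ) = (σ i : ℕ) := by
  simp [extFun, i.isLt]

lemma extFun_injective {n : ℕ} (σ : Equiv.Perm (Fin n)) :
    Function.Injective (extFun n ⇑σ) := by
  intro a b hab
  by_cases ha : a < n <;> by_cases hb : b < n
  · simp only [extFun, dif_pos ha, dif_pos hb] at hab
    have h2 := σ.injective (Fin.val_injective hab)
    exact congrArg Fin.val h2
  · simp only [extFun, dif_pos ha, dif_neg hb] at hab
    exact absurd (hab ▸ (σ ⟨a, ha⟩).isLt) hb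
  · simp only [extFun, dif_neg ha, dif_pos hb] at hab
    exact absurd (hab ▸ (σ ⟨b, hb⟩).isLt) ha
  · simpa [extFun, dif_neg ha, dif_neg hb] using hab

lemma permEndo_gen (τ : ℕ → ℕ) (c : ℕ) : permEndo τ (gen c) = gen (τ c) := by
  simp [permEndo, gen, Monoid.CoprodI.lift_of]

lemma permEndo_wp (τ : ℕ → ℕ) (L : List ℕ) : permEndo τ (wp L) = wp (L.map τ) := by
  induction L with
  | nil => simp [wp]
  | cons c L ih => rw [wp_cons, map_mul, permEndo_gen, ih, List.map_cons, wp_cons]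

lemma incl_permEndon {n : ℕ} (σ : Fin n → Fin n) (g : FreeZ2n n) :
    incl n (permEndon σ g) = permEndo (extFun n σ) (incl n g) := by
  have hcomp : (incl n).comp (permEndon σ) = (permEndo (extFun n σ)).comp (incl n) := by
    apply Monoid.CoprodI.ext_hom
    intro i
    ext x
    simp [incl, permEndon, permEndo, Monoid.CoprodI.lift_of, extFun_coe]
  exact DFunLike.congr_fun hcomp g

lemma permEndon_permEndon {n : ℕ} (σ τ : Fin n → Fin n) (g : FreeZ2n n) :
    permEndon σ (permEndon τ g) = permEndon (σ ∘ τ) g := by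
  have hcomp : (permEndon σ).comp (permEndon τ) = permEndon (σ ∘ τ) := by
    apply Monoid.CoprodI.ext_hom
    intro i
    ext x
    simp [permEndon, Monoid.CoprodI.lift_of]
  exact DFunLike.congr_fun hcomp g

lemma permEndon_id {n : ℕ} (g : FreeZ2n n) : permEndon (id : Fin n → Fin n) g = g := by
  have h : permEndon (id : Fin n → Fin n) = MonoidHom.id (FreeZ2n n) := by
    apply Monoid.CoprodI.ext_hom
    intro i
    ext x
    simp [permEndon, Monoid.CoprodI.lift_of]
  rw [h]
  rfl

end Groups


/-- For a skew category of partitions `R` and `n ∈ ℕ`,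
`F_n(R) = F_∞(R) ∩ ℤ₂^{*n}` is an `S_n`-invariant normal subgroup of
`ℤ₂^{*n}`, and `R_n` (the partitions of `R` with at most `n` blocks) consists
exactly of the rotations of partitions `ker(i)` with `a_i ∈ F_n(R)`. -/
theorem Fn_normalSubgroup_and_Rn (R : ∀ k l : ℕ, Set (Part k l))
    (hR : IsSkewCategory R) (n : ℕ) (hn : 0 < n) :
    (∃ Nn : Subgroup (FreeZ2n n),
      (Nn : Set (FreeZ2n n)) = incl n ⁻¹' Finfty R ∧ Nn.Normal ∧
        ∀ σ : Equiv.Perm (Fin n),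
          permEndon ⇑σ '' (Nn : Set (FreeZ2n n)) = (Nn : Set (FreeZ2n n))) ∧
    ∀ (k l : ℕ) (p : Part k l),
      (p ∈ R k l ∧ blockCount p ≤ n) ↔
        ∃ (k' : ℕ) (i : Fin k' → Fin n),
          aWord (fun x => (i x : ℕ)) ∈ Finfty R ∧
          IsRotationOf ⟨k, l, p⟩ ⟨k', 0, kerPart0 (fun x => (i x : ℕ))⟩ := by
  constructor
  · -- `F_n(R)` is an `S_n`-invariant normal subgroup
    refine ⟨{
        carrier := incl n ⁻¹' Finfty R
        one_mem' := ?_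
        mul_mem' := ?_
        inv_mem' := ?_ }, rfl, ?_, ?_⟩
    · intro a b ha hb
      obtain ⟨L1, g1, e1⟩ := mem_Finfty_iff.mp ha
      obtain ⟨L2, g2, e2⟩ := mem_Finfty_iff.mp hb
      show incl n (a * b) ∈ Finfty R
      rw [map_mul, e1, e2, ← wp_append]
      exact mem_Finfty_iff.mpr ⟨L1 ++ L2, g1.tensor hR g2, rfl⟩
    · show incl n 1 ∈ Finfty R
      rw [map_one]
      exact mem_Finfty_iff.mpr ⟨[], goodP_nil hR, rfl⟩
    · intro a ha
      obtain ⟨L, g1, e1⟩ := mem_Finfty_iff.mp ha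
      show incl n a⁻¹ ∈ Finfty R
      rw [map_inv, e1, ← wp_reverse]
      exact mem_Finfty_iff.mpr ⟨L.reverse, g1.reverse hR, rfl⟩
    · constructor
      intro x hx g
      obtain ⟨L, hL, hLe⟩ := mem_Finfty_iff.mp hx
      obtain ⟨u, rfl⟩ := exists_wpn g
      show incl n (wpn u * x * (wpn u)⁻¹) ∈ Finfty R
      rw [map_mul, map_mul, map_inv, incl_wpn, hLe, ← wp_reverse, ← wp_append, ← wp_append]
      exact mem_Finfty_iff.mpr ⟨_, GoodP.conj hR (u.map Fin.val) L hL, rfl⟩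
    · intro σ
      have hsub : ∀ (τ : Equiv.Perm (Fin n)) (x : FreeZ2n n),
          incl n x ∈ Finfty R → incl n (permEndon ⇑τ x) ∈ Finfty R := by
        intro τ x hx
        obtain ⟨L, hL, hLe⟩ := mem_Finfty_iff.mp hx
        rw [incl_permEndon, hLe, permEndo_wp]
        exact mem_Finfty_iff.mpr ⟨_, hL.relabel (extFun_injective τ), rfl⟩
      apply subset_antisymm
      · rintro _ ⟨x, hx, rfl⟩
        exact hsub σ x hx
      · intro x hx
        refine ⟨permEndon ⇑σ⁻¹ x, hsub σ⁻¹ x hx, ?_⟩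
        rw [permEndon_permEndon]
        have hid : (⇑σ ∘ ⇑σ⁻¹) = (id : Fin n → Fin n) := by
          funext y
          simp
        rw [hid, permEndon_id]
  · -- characterisation of `R_n`
    intro k l p
    constructor
    · rintro ⟨hp, hbc⟩
      obtain ⟨m, σ, hrot, hbcσ, hmem⟩ := flatten_exists hR l k p
      obtain ⟨i, hi⟩ := exists_fin_label (n := n) σ (le_of_eq_of_le hbcσ hbc)
      refine ⟨m, i, ?_, ?_⟩
      · refine ⟨m, (fun x => ((i x : ℕ))), ?_, rfl⟩
        rw [hi]
        exact hmem hp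
      · rw [hi]
        exact hrot
    · rintro ⟨k', i, hFin, hrot⟩
      obtain ⟨L, hL, hLe⟩ := mem_Finfty_iff.mp hFin
      have hGood : GoodP R (List.ofFn fun x => ((i x : ℕ))) [] :=
        goodP_of_wp_eq hR hL (hLe.symm.trans (aWord_eq_wp _))
      have hker : kerPart0 (fun x => ((i x : ℕ))) ∈ R k' 0 :=
        hGood.elim_mem (j := Fin.elim0) rfl (List.ofFn_zero)
      constructor
      · exact mem_of_rtg hR hrot hker
      · exact (blockCount_of_rtg hrot).trans_le (blockCount_kerPart0_le i)


end GTQG
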